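/- Let (N,v) be a minimal incomplete game with n ≥ 4 players and total excess Δ ≥ 0. Then the weak Weber set over 1-convex extensions strictly contains the imputation set: I(v) is contained in the union of the Weber sets of all 1-convex extensions of (N,v), and for every M ∈ ℝ there exist a 1-convex extension w of (N,v), a permutation σ of N, and a player i such that (m_σ^w)_i > M. -/

import Mathlib

open Finset

/-- The Shapley value `φ_i(w) = (1/n) ∑_{S ⊆ N∖{i}} C(n-1,|S|)⁻¹ (w(S∪{i}) - w(S))`. -/
noncomputable def shapley (n : ℕ) (w : Finset (Fin n) → ℝ) (i : Fin n) : ℝ :=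
  (1 / (n : ℝ)) * ∑ S ∈ (Finset.univ.erase i).powerset,
    ((Nat.choose (n - 1) S.card : ℝ))⁻¹ * (w (insert i S) - w S)

/-- A game is convex if `w(S) + w(T) ≤ w(S ∪ T) + w(S ∩ T)` for all coalitions. -/
def IsConvexGame {n : ℕ} (w : Finset (Fin n) → ℝ) : Prop :=
  ∀ S T : Finset (Fin n), w S + w T ≤ w (S ∪ T) + w (S ∩ T)

/-- The upper vector `b^w_i = w(N) - w(N∖{i})`. -/
noncomputable def upperVec {n : ℕ} (w : Finset (Fin n) → ℝ) (i : Fin n) : ℝ :=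
  w Finset.univ - w (Finset.univ.erase i)

/-- The gap function `g^w(S) = ∑_{i∈S} b^w_i - w(S)`. -/
noncomputable def gap {n : ℕ} (w : Finset (Fin n) → ℝ) (S : Finset (Fin n)) : ℝ :=
  (∑ i ∈ S, upperVec w i) - w S

/-- A game is 1-convex if `∑ b^w_i ≥ w(N)` and
`w(S) ≤ w(N) - ∑_{i ∈ N∖S} b^w_i` for every nonempty `S`. -/
def IsOneConvex {n : ℕ} (w : Finset (Fin n) → ℝ) : Prop :=
  w Finset.univ ≤ (∑ i, upperVec w i) ∧
  ∀ S : Finset (Fin n), S.Nonempty →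
    w S ≤ w Finset.univ - ∑ i ∈ Finset.univ \ S, upperVec w i

/-- `w` is an extension of the minimal incomplete game given by singleton values `v`
and grand-coalition value `vN`. -/
def IsExtension {n : ℕ} (v : Fin n → ℝ) (vN : ℝ) (w : Finset (Fin n) → ℝ) : Prop :=
  w ∅ = 0 ∧ (∀ i, w {i} = v i) ∧ w Finset.univ = vN

/-- Harsanyi dividend `d_w(T) = ∑_{S ⊆ T} (-1)^{|T|-|S|} w(S)`. -/
noncomputable def dividend {n : ℕ} (w : Finset (Fin n) → ℝ) (T : Finset (Fin n)) : ℝ :=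
  ∑ S ∈ T.powerset, (-1 : ℝ) ^ (T.card - S.card) * w S

/-- A game is positive if all Harsanyi dividends of nonempty coalitions are nonnegative. -/
def IsPositive {n : ℕ} (w : Finset (Fin n) → ℝ) : Prop :=
  ∀ T : Finset (Fin n), T.Nonempty → 0 ≤ dividend w T

/-- The extreme game `v^k`. -/
noncomputable def vgame (n : ℕ) (v : Fin n → ℝ) (Δ : ℝ) (k : Fin n)
    (S : Finset (Fin n)) : ℝ :=
  if 2 ≤ S.card ∧ k ∈ S then (∑ j ∈ S, v j) + Δ else ∑ j ∈ S, v j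

/-- The extreme game `v_T` (for `T` with `|T| ≥ 2`). -/
noncomputable def vTgame (n : ℕ) (v : Fin n → ℝ) (Δ : ℝ) (T : Finset (Fin n))
    (S : Finset (Fin n)) : ℝ :=
  if T ⊆ S then (∑ j ∈ S, v j) + Δ else ∑ j ∈ S, v j

/-- The extreme-ray game `e_T`. -/
def eTgame (n : ℕ) (T S : Finset (Fin n)) : ℝ := if S = T then -1 else 0

/-- The index set `E = {T ⊆ N : 2 ≤ |T| ≤ n-2}`. -/
def raysIndex (n : ℕ) : Finset (Finset (Fin n)) :=
  Finset.univ.filter (fun T => 2 ≤ T.card ∧ T.card ≤ n - 2)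

/-- The index set `N₁ = {T ⊆ N : |T| ≥ 2}`. -/
def coalN1 (n : ℕ) : Finset (Finset (Fin n)) :=
  Finset.univ.filter (fun T => 2 ≤ T.card)

/-- The convex combination `w_α = ∑_k α_k v^k`. -/
noncomputable def walpha (n : ℕ) (v : Fin n → ℝ) (Δ : ℝ) (α : Fin n → ℝ)
    (S : Finset (Fin n)) : ℝ :=
  ∑ k, α k * vgame n v Δ k S

/-- The game `w_{α,β} = ∑_k α_k v^k + ∑_{T∈E} β_T e_T`. -/
noncomputable def walphabeta (n : ℕ) (v : Fin n → ℝ) (Δ : ℝ) (α : Fin n → ℝ)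
    (β : Finset (Fin n) → ℝ) (S : Finset (Fin n)) : ℝ :=
  (∑ k, α k * vgame n v Δ k S) + ∑ T ∈ raysIndex n, β T * eTgame n T S

/-- The game `w_A = ∑_{T∈N₁} α_T v_T`. -/
noncomputable def wAgame (n : ℕ) (v : Fin n → ℝ) (Δ : ℝ) (A : Finset (Fin n) → ℝ)
    (S : Finset (Fin n)) : ℝ :=
  ∑ T ∈ coalN1 n, A T * vTgame n v Δ T S

/-- The imputation set `I(v)`. -/
def imputations (n : ℕ) (v : Fin n → ℝ) (vN : ℝ) : Set (Fin n → ℝ) :=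
  {x | (∑ i, x i) = vN ∧ ∀ i, v i ≤ x i}

/-- The imputation `I^k`. -/
noncomputable def Ik (n : ℕ) (v : Fin n → ℝ) (Δ : ℝ) (k : Fin n) : Fin n → ℝ :=
  fun i => if i = k then v i + Δ else v i

/-- The imputation `I^α`. -/
noncomputable def Ialpha (n : ℕ) (v : Fin n → ℝ) (Δ : ℝ) (α : Fin n → ℝ) : Fin n → ℝ :=
  fun i => v i + α i * Δ

/-- The core of a game. -/
def core {n : ℕ} (w : Finset (Fin n) → ℝ) : Set (Fin n → ℝ) :=
  {x | (∑ i, x i) = w Finset.univ ∧ ∀ S : Finset (Fin n), w S ≤ ∑ i ∈ S, x i}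

/-- The marginal vector `m_σ^w`. -/
noncomputable def margVec {n : ℕ} (w : Finset (Fin n) → ℝ) (σ : Equiv.Perm (Fin n))
    (i : Fin n) : ℝ :=
  w (insert i (Finset.univ.filter (fun j => σ j < σ i))) -
    w (Finset.univ.filter (fun j => σ j < σ i))

/-- The Weber set: the convex hull of all marginal vectors. -/
noncomputable def weber {n : ℕ} (w : Finset (Fin n) → ℝ) : Set (Fin n → ℝ) :=
  convexHull ℝ {m | ∃ σ : Equiv.Perm (Fin n), m = margVec w σ}

/-- The maximal surplus `s_{ij}(x,w) = max {w(S) - x(S) : i ∈ S, j ∉ S}`. -/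
noncomputable def surplus {n : ℕ} (w : Finset (Fin n) → ℝ) (x : Fin n → ℝ)
    (i j : Fin n) : ℝ :=
  sSup {r : ℝ | ∃ S : Finset (Fin n), i ∈ S ∧ j ∉ S ∧ r = w S - ∑ m ∈ S, x m}

/-- The prekernel of a game. -/
def prekernel {n : ℕ} (w : Finset (Fin n) → ℝ) : Set (Fin n → ℝ) :=
  {x | (∑ i, x i) = w Finset.univ ∧
    ∀ i j : Fin n, i ≠ j → surplus w x i j = surplus w x j i}

/-! ### Auxiliary material for stmt17 -/

namespace S17

variable {n : ℕ}

/-- The game `w_x(S) = x(S)` for `|S| ≥ 2`, `v(S)` otherwise. -/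
noncomputable def wgen (n : ℕ) (v x : Fin n → ℝ) (S : Finset (Fin n)) : ℝ :=
  if 2 ≤ S.card then ∑ j ∈ S, x j else ∑ j ∈ S, v j

lemma wgen_small (v x : Fin n → ℝ) {S : Finset (Fin n)} (h : S.card < 2) :
    wgen n v x S = ∑ j ∈ S, v j := if_neg (by omega)

lemma wgen_big (v x : Fin n → ℝ) {S : Finset (Fin n)} (h : 2 ≤ S.card) :
    wgen n v x S = ∑ j ∈ S, x j := if_pos h

lemma card_univ_fin : (Finset.univ : Finset (Fin n)).card = n := by simp

lemma card_erase (i : Fin n) : ((Finset.univ : Finset (Fin n)).erase i).card = n - 1 := by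
  rw [card_erase_of_mem (mem_univ i), card_univ_fin]

lemma upperVec_wgen (hn : 3 ≤ n) (v x : Fin n → ℝ) (i : Fin n) :
    upperVec (wgen n v x) i = x i := by
  unfold upperVec
  rw [wgen_big v x (by rw [card_univ_fin]; omega),
    wgen_big v x (by rw [card_erase]; omega)]
  have := Finset.sum_erase_add univ x (mem_univ i)
  linarith

lemma isExtension_wgen (hn : 2 ≤ n) (v x : Fin n → ℝ) (vN : ℝ) (hx : ∑ i, x i = vN) :
    IsExtension v vN (wgen n v x) := by
  refine ⟨?_, ?_, ?_⟩
  · rw [wgen_small v x (by simp)]; simp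
  · intro i; rw [wgen_small v x (by simp)]; simp
  · rw [wgen_big v x (by rw [card_univ_fin]; omega)]; exact hx

lemma oneConvex_wgen (hn : 3 ≤ n) (v x : Fin n → ℝ) (hvx : ∀ i, v i ≤ x i) :
    IsOneConvex (wgen n v x) := by
  have hU : ∀ i, upperVec (wgen n v x) i = x i := upperVec_wgen hn v x
  constructor
  · rw [wgen_big v x (by rw [card_univ_fin]; omega)]
    exact le_of_eq (Finset.sum_congr rfl fun i _ => (hU i).symm)
  · intro S hS
    have hsplit : ∑ i ∈ univ \ S, x i + ∑ i ∈ S, x i = ∑ i, x i :=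
      Finset.sum_sdiff (subset_univ S)
    have hb : ∑ i ∈ univ \ S, upperVec (wgen n v x) i = ∑ i ∈ univ \ S, x i :=
      Finset.sum_congr rfl fun i _ => hU i
    rw [hb, wgen_big v x (S := univ) (by rw [card_univ_fin]; omega)]
    by_cases h2 : 2 ≤ S.card
    · rw [wgen_big v x h2]; linarith
    · rw [wgen_small v x (S := S) (by omega)]
      have : ∑ j ∈ S, v j ≤ ∑ j ∈ S, x j := Finset.sum_le_sum fun i _ => hvx i
      linarith

lemma margVec_wgen_big (v x : Fin n → ℝ) (σ : Equiv.Perm (Fin n)) (i : Fin n)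
    (h : 2 ≤ (univ.filter (fun j => σ j < σ i)).card) :
    margVec (wgen n v x) σ i = x i := by
  have hiP : i ∉ univ.filter (fun j => σ j < σ i) := by simp
  unfold margVec
  rw [wgen_big v x (by rw [card_insert_of_notMem hiP]; omega),
    wgen_big v x h, Finset.sum_insert hiP]
  ring

section W2

variable [NeZero n]

lemma val1 (hn : 2 ≤ n) : (1 : Fin n).val = 1 := by
  rw [Fin.val_one']; exact Nat.mod_eq_of_lt (by omega)

lemma val2 (hn : 4 ≤ n) : (2 : Fin n).val = 2 := by
  show (OfNat.ofNat 2 : Fin n).val = 2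
  unfold OfNat.ofNat Fin.instOfNat
  show 2 % n = 2
  exact Nat.mod_eq_of_lt (by omega)

lemma fin01 (hn : 2 ≤ n) : (0 : Fin n) ≠ 1 := by
  intro hh
  have := congrArg Fin.val hh
  rw [Fin.val_zero, val1 hn] at this
  omega

lemma fin20 (hn : 4 ≤ n) : (2 : Fin n) ≠ 0 := by
  intro hh
  have := congrArg Fin.val hh
  rw [Fin.val_zero, val2 hn] at this
  omega

lemma fin21 (hn : 4 ≤ n) : (2 : Fin n) ≠ 1 := by
  intro hh
  have := congrArg Fin.val hh
  rw [val1 (by omega), val2 hn] at this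
  omega

lemma Tcard (hn : 2 ≤ n) : ({0, 1} : Finset (Fin n)).card = 2 :=
  card_pair (fin01 hn)

/-- The game used for unboundedness: `v^0` minus `t` on the coalition `{0,1}`. -/
noncomputable def w2 (n : ℕ) [NeZero n] (v : Fin n → ℝ) (Δ t : ℝ)
    (S : Finset (Fin n)) : ℝ :=
  vgame n v Δ 0 S - (if S = ({0, 1} : Finset (Fin n)) then t else 0)

lemma vgame_pos {v : Fin n → ℝ} {Δ : ℝ} {S : Finset (Fin n)} (hc : 2 ≤ S.card)
    (hm : (0 : Fin n) ∈ S) : vgame n v Δ 0 S = (∑ j ∈ S, v j) + Δ := if_pos ⟨hc, hm⟩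

lemma vgame_neg {v : Fin n → ℝ} {Δ : ℝ} {S : Finset (Fin n)}
    (h : ¬(2 ≤ S.card ∧ (0 : Fin n) ∈ S)) : vgame n v Δ 0 S = ∑ j ∈ S, v j := if_neg h

lemma w2_of_ne {v : Fin n → ℝ} {Δ t : ℝ} {S : Finset (Fin n)}
    (hS : S ≠ ({0, 1} : Finset (Fin n))) : w2 n v Δ t S = vgame n v Δ 0 S := by
  simp only [w2]
  rw [if_neg hS, sub_zero]

lemma w2_univ (hn : 4 ≤ n) (v : Fin n → ℝ) (Δ t : ℝ) :
    w2 n v Δ t univ = (∑ i, v i) + Δ := by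
  rw [w2_of_ne (by
    intro h
    have := congrArg Finset.card h
    rw [S17.card_univ_fin, Tcard (by omega)] at this
    omega), vgame_pos (by rw [S17.card_univ_fin]; omega) (mem_univ 0)]

lemma w2_ext (hn : 4 ≤ n) (v : Fin n → ℝ) (vN Δ t : ℝ) (hΔdef : Δ = vN - ∑ i, v i) :
    IsExtension v vN (w2 n v Δ t) := by
  refine ⟨?_, ?_, ?_⟩
  · rw [w2_of_ne (by
      intro h
      have := congrArg Finset.card h
      rw [Finset.card_empty, Tcard (by omega)] at this
      omega), vgame_neg (by simp)]
    simp
  · intro i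
    rw [w2_of_ne (by
      intro h
      have := congrArg Finset.card h
      rw [Finset.card_singleton, Tcard (by omega)] at this
      omega), vgame_neg (by simp)]
    simp
  · rw [w2_univ hn]; linarith

lemma upperVec_w2 (hn : 4 ≤ n) (v : Fin n → ℝ) (Δ t : ℝ) (i : Fin n) :
    upperVec (w2 n v Δ t) i = v i + (if i = 0 then Δ else 0) := by
  have hce : ((univ : Finset (Fin n)).erase i).card = n - 1 := S17.card_erase i
  have hne : (univ : Finset (Fin n)).erase i ≠ ({0, 1} : Finset (Fin n)) := by
    intro h
    have := congrArg Finset.card h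
    rw [hce, Tcard (by omega)] at this
    omega
  have hsum := Finset.sum_erase_add univ v (mem_univ i)
  unfold upperVec
  rw [w2_univ hn, w2_of_ne hne]
  by_cases hi : i = 0
  · subst hi
    rw [vgame_neg (by simp)]
    rw [if_pos rfl]
    linarith
  · rw [vgame_pos (by rw [hce]; omega) (Finset.mem_erase.2 ⟨Ne.symm hi, mem_univ 0⟩)]
    rw [if_neg hi]
    linarith

lemma sum_upperVec_w2 (hn : 4 ≤ n) (v : Fin n → ℝ) (Δ t : ℝ) :
    ∑ i, upperVec (w2 n v Δ t) i = (∑ i, v i) + Δ := by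
  simp only [upperVec_w2 hn]
  rw [Finset.sum_add_distrib, Finset.sum_ite_eq' univ (0 : Fin n) (fun _ => Δ)]
  simp

lemma oneConvex_w2 (hn : 4 ≤ n) (v : Fin n → ℝ) (Δ t : ℝ) (hΔ : 0 ≤ Δ) (ht : 0 ≤ t) :
    IsOneConvex (w2 n v Δ t) := by
  constructor
  · rw [w2_univ hn, sum_upperVec_w2 hn]
  · intro S hS
    have hupper : ∑ i ∈ univ \ S, upperVec (w2 n v Δ t) i
        = (∑ i ∈ univ \ S, v i) + (if (0 : Fin n) ∈ S then 0 else Δ) := by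
      simp only [upperVec_w2 hn]
      rw [Finset.sum_add_distrib, Finset.sum_ite_eq' (univ \ S) (0 : Fin n) (fun _ => Δ)]
      by_cases h0 : (0 : Fin n) ∈ S <;> simp [h0]
    have hsplit : (∑ i ∈ univ \ S, v i) + ∑ i ∈ S, v i = ∑ i, v i :=
      Finset.sum_sdiff (subset_univ S)
    rw [w2_univ hn, hupper]
    by_cases h0 : (0 : Fin n) ∈ S
    · rw [if_pos h0]
      have hle : vgame n v Δ 0 S ≤ (∑ j ∈ S, v j) + Δ := by
        unfold vgame
        split
        · linarith
        · linarith
      have : w2 n v Δ t S ≤ vgame n v Δ 0 S := by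
        simp only [w2]
        split <;> linarith
      linarith
    · rw [if_neg h0]
      have hSne : S ≠ ({0, 1} : Finset (Fin n)) := by
        intro h; exact h0 (h ▸ (by simp : (0:Fin n) ∈ ({0,1} : Finset (Fin n))))
      rw [w2_of_ne hSne, vgame_neg (by tauto)]
      linarith

lemma two_le_card {P : Finset (Fin n)} {a b : Fin n} (hab : a ≠ b) (ha : a ∈ P)
    (hb : b ∈ P) : 2 ≤ P.card := by
  have hsub : ({a, b} : Finset (Fin n)) ⊆ P := by
    intro j hj
    rcases mem_insert.1 hj with h | h
    · exact h ▸ ha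
    · exact (mem_singleton.1 h) ▸ hb
  calc 2 = ({a, b} : Finset (Fin n)).card := (card_pair hab).symm
    _ ≤ P.card := card_le_card hsub

lemma filter_lt_zero : (univ.filter fun j : Fin n => j < (0 : Fin n)) = ∅ := by
  ext j
  simp only [mem_filter, mem_univ, true_and, notMem_empty, iff_false, Fin.lt_def,
    Fin.val_zero]
  omega

lemma filter_lt_one (hn : 2 ≤ n) :
    (univ.filter fun j : Fin n => j < (1 : Fin n)) = {0} := by
  ext j
  simp only [mem_filter, mem_univ, true_and, mem_singleton, Fin.lt_def, val1 hn,
    Fin.ext_iff, Fin.val_zero]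
  omega

lemma filter_lt_two (hn : 4 ≤ n) :
    (univ.filter fun j : Fin n => j < (2 : Fin n)) = {0, 1} := by
  ext j
  simp only [mem_filter, mem_univ, true_and, mem_insert, mem_singleton, Fin.lt_def,
    val2 hn, Fin.ext_iff, Fin.val_zero, val1 (by omega : 2 ≤ n)]
  omega

lemma margVec_wgen_id0 (hn : 4 ≤ n) (v x : Fin n → ℝ) :
    margVec (wgen n v x) 1 0 = v 0 := by
  unfold margVec
  simp only [Equiv.Perm.coe_one, id_eq]
  erw [filter_lt_zero]
  rw [wgen_small v x (by simp), wgen_small v x (by simp)]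
  simp

lemma margVec_wgen_id1 (hn : 4 ≤ n) (v x : Fin n → ℝ) :
    margVec (wgen n v x) 1 1 = x 1 + x 0 - v 0 := by
  have h10 : (1 : Fin n) ∉ ({0} : Finset (Fin n)) := by
    simp [(fin01 (by omega : 2 ≤ n)).symm]
  unfold margVec
  simp only [Equiv.Perm.coe_one, id_eq]
  erw [filter_lt_one (by omega),
    wgen_big v x (by rw [card_insert_of_notMem h10]; simp),
    Finset.sum_insert h10, sum_singleton,
    wgen_small v x (by simp), sum_singleton]

lemma margVec_wgen_id_big (hn : 4 ≤ n) (v x : Fin n → ℝ) (i : Fin n) (hi : 2 ≤ i.val) :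
    margVec (wgen n v x) 1 i = x i := by
  apply margVec_wgen_big
  refine two_le_card (fin01 (by omega : 2 ≤ n)) ?_ ?_
  · simp only [Equiv.Perm.coe_one, id_eq, mem_filter, mem_univ, true_and, Fin.lt_def,
      Fin.val_zero]
    omega
  · simp only [Equiv.Perm.coe_one, id_eq, mem_filter, mem_univ, true_and, Fin.lt_def,
      val1 (by omega : 2 ≤ n)]
    omega

lemma margVec_wgen_sw1 (hn : 4 ≤ n) (v x : Fin n → ℝ) :
    margVec (wgen n v x) (Equiv.swap 0 1) 1 = v 1 := by
  have hf : (univ.filter fun j : Fin n =>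
      Equiv.swap (0 : Fin n) 1 j < Equiv.swap (0 : Fin n) 1 1) = ∅ := by
    ext j
    simp only [Equiv.swap_apply_right, mem_filter, mem_univ, true_and, notMem_empty,
      iff_false, Fin.lt_def, Fin.val_zero]
    omega
  unfold margVec
  rw [hf]
  rw [wgen_small v x (by simp), wgen_small v x (by simp)]
  simp

lemma margVec_wgen_sw0 (hn : 4 ≤ n) (v x : Fin n → ℝ) :
    margVec (wgen n v x) (Equiv.swap 0 1) 0 = x 0 + x 1 - v 1 := by
  have hf : (univ.filter fun j : Fin n =>
      Equiv.swap (0 : Fin n) 1 j < Equiv.swap (0 : Fin n) 1 0) = {1} := by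
    ext j
    simp only [Equiv.swap_apply_left, mem_filter, mem_univ, true_and, mem_singleton,
      Fin.lt_def, val1 (by omega : 2 ≤ n)]
    constructor
    · intro h
      have h0 : Equiv.swap (0 : Fin n) 1 j = 0 := Fin.ext (by rw [Fin.val_zero]; omega)
      have := congrArg (Equiv.swap (0 : Fin n) 1) h0
      rwa [Equiv.swap_apply_self, Equiv.swap_apply_left] at this
    · intro h
      rw [h, Equiv.swap_apply_right, Fin.val_zero]
      omega
  have h01' : (0 : Fin n) ∉ ({1} : Finset (Fin n)) := by simp [fin01 (by omega : 2 ≤ n)]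
  unfold margVec
  rw [hf, wgen_big v x (by rw [card_insert_of_notMem h01']; simp),
    Finset.sum_insert h01', sum_singleton,
    wgen_small v x (by simp), sum_singleton]

lemma margVec_wgen_sw_big (hn : 4 ≤ n) (v x : Fin n → ℝ) (i : Fin n) (hi : 2 ≤ i.val) :
    margVec (wgen n v x) (Equiv.swap 0 1) i = x i := by
  have hi0 : i ≠ 0 := fun h => by rw [h, Fin.val_zero] at hi; omega
  have hi1 : i ≠ 1 := fun h => by rw [h, val1 (by omega : 2 ≤ n)] at hi; omega
  have hii : Equiv.swap (0 : Fin n) 1 i = i := Equiv.swap_apply_of_ne_of_ne hi0 hi1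
  apply margVec_wgen_big
  refine two_le_card (fin01 (by omega : 2 ≤ n)) ?_ ?_
  · simp only [mem_filter, mem_univ, true_and, Equiv.swap_apply_left, hii, Fin.lt_def,
      val1 (by omega : 2 ≤ n)]
    omega
  · simp only [mem_filter, mem_univ, true_and, Equiv.swap_apply_right, hii, Fin.lt_def,
      Fin.val_zero]
    omega

lemma margVec_w2 (hn : 4 ≤ n) (v : Fin n → ℝ) (Δ t : ℝ) :
    margVec (w2 n v Δ t) 1 2 = v 2 + t := by
  have h2T : (2 : Fin n) ∉ ({0, 1} : Finset (Fin n)) := by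
    simp [fin20 hn, fin21 hn]
  have hins : insert (2 : Fin n) ({0, 1} : Finset (Fin n)) ≠ ({0, 1} : Finset (Fin n)) := by
    intro h
    have := congrArg Finset.card h
    rw [card_insert_of_notMem h2T, Tcard (by omega)] at this
    omega
  unfold margVec
  simp only [Equiv.Perm.coe_one, id_eq]
  erw [filter_lt_two hn, w2_of_ne hins,
    vgame_pos (by rw [card_insert_of_notMem h2T, Tcard (by omega)]; omega)
      (mem_insert_of_mem (mem_insert_self _ _)),
    Finset.sum_insert h2T]
  simp only [w2]
  rw [if_pos trivial, vgame_pos (by rw [Tcard (by omega)] : 2 ≤ _) (mem_insert_self _ _)]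
  ring

end W2

end S17

/-- the weak Weber set over 1-convex extensions strictly contains `I(v)`:
every imputation lies in the Weber set of some 1-convex extension, and marginal vectors of
1-convex extensions are unbounded above. -/
theorem stmt17 (n : ℕ) (hn : 4 ≤ n) (v : Fin n → ℝ) (vN : ℝ) (Δ : ℝ)
    (hΔdef : Δ = vN - ∑ i, v i) (hΔ : 0 ≤ Δ) :
    (∀ x ∈ imputations n v vN, ∃ w : Finset (Fin n) → ℝ,
        IsExtension v vN w ∧ IsOneConvex w ∧ x ∈ weber w) ∧
    (∀ M : ℝ, ∃ (w : Finset (Fin n) → ℝ) (σ : Equiv.Perm (Fin n)) (i : Fin n),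
        IsExtension v vN w ∧ IsOneConvex w ∧ M < margVec w σ i) := by
  haveI : NeZero n := ⟨by omega⟩
  constructor
  · rintro x ⟨hxsum, hxge⟩
    refine ⟨S17.wgen n v x, S17.isExtension_wgen (by omega) v x vN hxsum,
      S17.oneConvex_wgen (by omega) v x hxge, ?_⟩
    unfold weber
    have hm1 : margVec (S17.wgen n v x) 1 ∈
        convexHull ℝ {m | ∃ σ : Equiv.Perm (Fin n), m = margVec (S17.wgen n v x) σ} :=
      subset_convexHull ℝ _ ⟨1, rfl⟩
    have hm2 : margVec (S17.wgen n v x) (Equiv.swap 0 1) ∈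
        convexHull ℝ {m | ∃ σ : Equiv.Perm (Fin n), m = margVec (S17.wgen n v x) σ} :=
      subset_convexHull ℝ _ ⟨Equiv.swap 0 1, rfl⟩
    have hc0 : 0 ≤ x 0 - v 0 := by linarith [hxge 0]
    have hc1 : 0 ≤ x 1 - v 1 := by linarith [hxge 1]
    have hval : ∀ i : Fin n, i ≠ 0 → i ≠ 1 → 2 ≤ i.val := by
      intro i hi0 hi1
      by_contra h
      push_neg at h
      have : i.val = 0 ∨ i.val = 1 := by omega
      rcases this with h' | h'
      · exact hi0 (Fin.ext (by rw [Fin.val_zero]; omega))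
      · exact hi1 (Fin.ext (by rw [S17.val1 (by omega : 2 ≤ n)]; omega))
    by_cases hc : x 0 - v 0 = 0
    · have hxeq : x = margVec (S17.wgen n v x) 1 := by
        funext i
        by_cases hi0 : i = 0
        · subst hi0; rw [S17.margVec_wgen_id0 hn]; linarith
        · by_cases hi1 : i = 1
          · subst hi1; rw [S17.margVec_wgen_id1 hn]; linarith
          · rw [S17.margVec_wgen_id_big hn v x i (hval i hi0 hi1)]
      rwa [← hxeq] at hm1
    · have hs0 : 0 < x 0 - v 0 + (x 1 - v 1) := by
        have : 0 < x 0 - v 0 := lt_of_le_of_ne hc0 (Ne.symm hc)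
        linarith
      have hs : x 0 - v 0 + (x 1 - v 1) ≠ 0 := ne_of_gt hs0
      have haa : 0 ≤ (x 1 - v 1) / (x 0 - v 0 + (x 1 - v 1)) := div_nonneg hc1 (le_of_lt hs0)
      have hbb : 0 ≤ (x 0 - v 0) / (x 0 - v 0 + (x 1 - v 1)) := div_nonneg hc0 (le_of_lt hs0)
      have hab : (x 1 - v 1) / (x 0 - v 0 + (x 1 - v 1))
          + (x 0 - v 0) / (x 0 - v 0 + (x 1 - v 1)) = 1 := by
        rw [← add_div]
        rw [show x 1 - v 1 + (x 0 - v 0) = x 0 - v 0 + (x 1 - v 1) by ring]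
        exact div_self hs
      have hxeq : x = ((x 1 - v 1) / (x 0 - v 0 + (x 1 - v 1))) • margVec (S17.wgen n v x) 1
          + ((x 0 - v 0) / (x 0 - v 0 + (x 1 - v 1))) •
            margVec (S17.wgen n v x) (Equiv.swap 0 1) := by
        funext i
        simp only [Pi.add_apply, Pi.smul_apply, smul_eq_mul]
        by_cases hi0 : i = 0
        · subst hi0
          rw [S17.margVec_wgen_id0 hn, S17.margVec_wgen_sw0 hn]
          field_simp
          ring
        · by_cases hi1 : i = 1
          · subst hi1
            rw [S17.margVec_wgen_id1 hn, S17.margVec_wgen_sw1 hn]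
            field_simp
            ring
          · rw [S17.margVec_wgen_id_big hn v x i (hval i hi0 hi1),
              S17.margVec_wgen_sw_big hn v x i (hval i hi0 hi1)]
            field_simp
            ring
      have hkey := (convex_convexHull ℝ _) hm1 hm2 haa hbb hab
      rwa [← hxeq] at hkey
  · intro M
    refine ⟨S17.w2 n v Δ (max (M - v 2 + 1) 0), 1, 2,
      S17.w2_ext hn v vN Δ _ hΔdef,
      S17.oneConvex_w2 hn v Δ _ hΔ (le_max_right _ _), ?_⟩
    rw [S17.margVec_w2 hn]
    have := le_max_left (M - v 2 + 1) 0
    linarith
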